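/- Let F be a field of characteristic 2. Then the associative algebra M_2(F) of 2×2 matrices over F is Lie center-by-metabelian; that is, for all a, b, c, d, e in M_2(F), the Lie bracket [[[a,b],[c,d]], e] = 0, where [x,y] = xy - yx. -/
import Mathlib

lemma key_scalar (F : Type*) [Field F] [CharP F 2]
    (x y : Matrix (Fin 2) (Fin 2) F) (hx : x.trace = 0) (hy : y.trace = 0) :
    x * y - y * x = (x 0 1 * y 1 0 - y 0 1 * x 1 0) • (1 : Matrix (Fin 2) (Fin 2) F) := by
  have h2 : (2:F) = 0 := by exact_mod_cast CharP.cast_eq_zero F 2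
  have hx' : x 1 1 = x 0 0 := by
    rw [Matrix.trace_fin_two] at hx
    linear_combination hx - x 0 0 * h2
  have hy' : y 1 1 = y 0 0 := by
    rw [Matrix.trace_fin_two] at hy
    linear_combination hy - y 0 0 * h2
  ext i j
  fin_cases i <;> fin_cases j <;>
    simp [Matrix.mul_apply, Fin.sum_univ_two, Matrix.one_apply, hx', hy'] <;> ring_nf <;>
    linear_combination (x 1 0 * y 0 1 - y 1 0 * x 0 1) * h2

/-- Over a field of characteristic 2, the algebra `M₂(F)` is Lie
center-by-metabelian: `[[[a,b],[c,d]],e] = 0` where `[x,y] = xy - yx`. -/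
theorem m2_lie_center_by_metabelian (F : Type*) [Field F] [CharP F 2]
    (a b c d e : Matrix (Fin 2) (Fin 2) F) :
    ((a * b - b * a) * (c * d - d * c) - (c * d - d * c) * (a * b - b * a)) * e -
      e * ((a * b - b * a) * (c * d - d * c) - (c * d - d * c) * (a * b - b * a)) = 0 := by
  have hx : (a * b - b * a).trace = 0 := by
    rw [Matrix.trace_sub, Matrix.trace_mul_comm, sub_self]
  have hy : (c * d - d * c).trace = 0 := by
    rw [Matrix.trace_sub, Matrix.trace_mul_comm, sub_self]
  rw [key_scalar F (a * b - b * a) (c * d - d * c) hx hy,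
    Matrix.smul_mul, Matrix.mul_smul, one_mul, mul_one, sub_self]
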